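/- For every positive integer n, the game tiny-n, defined as +_n = {0 | {0 | -n}}, is strictly positive but less than every positive dyadic rational game; in particular 0 < +_n < 1/2^k for all k ≥ 0. -/

import Mathlib

/-! Combinatorial game theory (`SetTheory.PGame`) has been removed from Mathlib; the
definitions the statement needs are reproduced here with their old meaning. -/

universe u

namespace SetTheory

/-- Pre-games (as in the older Mathlib). -/
inductive PGame : Type (u + 1)
  | mk : ∀ α β : Type u, (α → PGame) → (β → PGame) → PGame

namespace PGame

/-- The indexing type for allowable moves by Left. -/
def LeftMoves : PGame → Type u
  | mk l _ _ _ => l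

/-- The indexing type for allowable moves by Right. -/
def RightMoves : PGame → Type u
  | mk _ r _ _ => r

/-- The new game after Left makes an allowed move. -/
def moveLeft : ∀ g : PGame, LeftMoves g → PGame
  | mk _l _ L _ => L

/-- The new game after Right makes an allowed move. -/
def moveRight : ∀ g : PGame, RightMoves g → PGame
  | mk _ _r _ R => R

/-- Construct a pre-game from list of pre-games describing the available moves for Left and
Right. -/
def ofLists (L R : List PGame.{u}) : PGame.{u} :=
  mk (ULift (Fin L.length)) (ULift (Fin R.length)) (fun i => L[i.down.1]) fun j ↦ R[j.down.1]

/-- `x` is an option of `y` if Left or Right can move from `y` to `x`. -/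
inductive IsOption : PGame → PGame → Prop
  | moveLeft {x : PGame} (i : x.LeftMoves) : IsOption (x.moveLeft i) x
  | moveRight {x : PGame} (i : x.RightMoves) : IsOption (x.moveRight i) x

theorem wf_isOption : WellFounded IsOption :=
  ⟨fun x => by
    induction x with
    | mk l r L R IHl IHr =>
      refine Acc.intro _ fun y h => ?_
      cases h with
      | moveLeft i => exact IHl i
      | moveRight j => exact IHr j⟩

/-- The pre-game `Zero` is defined by `0 = { | }`. -/
instance : Zero PGame :=
  ⟨⟨PEmpty, PEmpty, PEmpty.elim, PEmpty.elim⟩⟩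

/-- The negation of `{L | R}` is `{-R | -L}`. -/
def neg : PGame → PGame
  | ⟨l, r, L, R⟩ => ⟨r, l, fun i => neg (R i), fun i => neg (L i)⟩

instance : Neg PGame :=
  ⟨neg⟩

/-- The less or equal relation on pre-games. -/
instance le : LE PGame :=
  ⟨Sym2.GameAdd.recursion wf_isOption fun x y le =>
      (∀ i, ¬le y (x.moveLeft i) (Sym2.GameAdd.snd_fst <| IsOption.moveLeft i)) ∧
        ∀ j, ¬le (y.moveRight j) x (Sym2.GameAdd.fst_snd <| IsOption.moveRight j)⟩

/-- `x < y` iff `x ≤ y` and not `y ≤ x` (as for the old `Preorder PGame`). -/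
instance : LT PGame :=
  ⟨fun x y => x ≤ y ∧ ¬y ≤ x⟩

end PGame

end SetTheory

open SetTheory PGame
open scoped PGame

/-- The integer game `n`: `0 = { | }` and `n = {n-1 | }` for `n > 0`. -/
def natGame : ℕ → PGame
  | 0 => 0
  | n + 1 => PGame.ofLists [natGame n] []

/-- The game `1/2^k`: `halfPow 0 = 1` and `halfPow (k+1) = {0 | halfPow k}`. -/
def halfPow : ℕ → PGame
  | 0 => natGame 1
  | k + 1 => PGame.ofLists [0] [halfPow k]

/-- The game tiny-n, `+_n = {0 | {0 | -n}}`. -/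
def tiny (n : ℕ) : PGame :=
  PGame.ofLists [0] [PGame.ofLists [0] [-natGame n]]

namespace SetTheory
namespace PGame

def LF (x y : PGame) : Prop := ¬ y ≤ x

theorem le_iff_forall_lf {x y : PGame} :
    x ≤ y ↔ (∀ i, LF (x.moveLeft i) y) ∧ ∀ j, LF x (y.moveRight j) := by
  unfold LE.le le
  simp only
  rw [Sym2.GameAdd.recursion_eq]
  rfl

theorem lt_iff_le_and_lf {x y : PGame} : x < y ↔ x ≤ y ∧ LF x y := Iff.rfl

theorem _root_.LT.lt.lf {x y : PGame} (h : x < y) : LF x y := h.2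

theorem lf_of_moveRight_le {x y : PGame} {j : x.RightMoves} (h : x.moveRight j ≤ y) : LF x y :=
  fun h' => (le_iff_forall_lf.1 h').2 j h

private theorem le_trans_aux {x y z : PGame}
    (h₁ : ∀ {i}, y ≤ z → z ≤ x.moveLeft i → y ≤ x.moveLeft i)
    (h₂ : ∀ {j}, z.moveRight j ≤ x → x ≤ y → z.moveRight j ≤ y) (hxy : x ≤ y) (hyz : y ≤ z) :
    x ≤ z :=
  le_iff_forall_lf.2 ⟨fun i h => (le_iff_forall_lf.1 hxy).1 i (h₁ hyz h),
    fun j h => (le_iff_forall_lf.1 hyz).2 j (h₂ h hxy)⟩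

private theorem le_refl' (x : PGame) : x ≤ x := by
  induction x with
  | mk l r L R IHl IHr =>
    refine le_iff_forall_lf.2 ⟨fun i h => ?_, fun j h => ?_⟩
    · exact (le_iff_forall_lf.1 h).1 i (IHl i)
    · exact (le_iff_forall_lf.1 h).2 j (IHr j)

private theorem le_trans3 (x y z : PGame) :
    (x ≤ y → y ≤ z → x ≤ z) ∧ (y ≤ z → z ≤ x → y ≤ x) ∧ (z ≤ x → x ≤ y → z ≤ y) := by
  induction x generalizing y z with
  | mk xl xr xL xR IHxl IHxr =>
  induction y generalizing z with
  | mk yl yr yL yR IHyl IHyr =>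
  induction z with
  | mk zl zr zL zR IHzl IHzr =>
  exact
    ⟨le_trans_aux (fun {i} => (IHxl i _ _).2.1) fun {j} => (IHzr j).2.2,
      le_trans_aux (fun {i} => (IHyl i _).2.2) fun {j} => (IHxr j _ _).1,
      le_trans_aux (fun {i} => (IHzl i).1) fun {j} => (IHyr j _).2.1⟩

instance : Preorder PGame :=
  { le := (· ≤ ·)
    lt := (· < ·)
    le_refl := le_refl'
    le_trans := fun x y z => (le_trans3 x y z).1
    lt_iff_le_not_ge := fun _ _ => Iff.rfl }

theorem zero_le_lf {x : PGame} : 0 ≤ x ↔ ∀ j, LF 0 (x.moveRight j) := by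
  rw [le_iff_forall_lf]
  exact ⟨fun h => h.2, fun h => ⟨fun i => PEmpty.elim i, h⟩⟩

theorem zero_lf_le {x : PGame} : LF 0 x ↔ ∃ i, 0 ≤ x.moveLeft i := by
  unfold LF
  rw [le_iff_forall_lf]
  simp only [LF, not_and_or, not_forall, not_not]
  exact ⟨fun h => h.elim id fun ⟨j, _⟩ => PEmpty.elim j, Or.inl⟩

theorem neg_le_neg_iff' (x y : PGame) : (-y ≤ -x ↔ x ≤ y) ∧ (-x ≤ -y ↔ y ≤ x) := by
  induction x generalizing y with
  | mk xl xr xL xR IHxl IHxr =>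
  induction y with
  | mk yl yr yL yR IHyl IHyr =>
  refine ⟨⟨fun h => ?_, fun h => ?_⟩, ⟨fun h => ?_, fun h => ?_⟩⟩
  · obtain ⟨h1, h2⟩ := le_iff_forall_lf.1 h
    exact le_iff_forall_lf.2 ⟨fun i h' => h2 i ((IHxl i _).2.2 h'),
      fun j h' => h1 j ((IHyr j).2.2 h')⟩
  · obtain ⟨h1, h2⟩ := le_iff_forall_lf.1 h
    exact le_iff_forall_lf.2 ⟨fun i h' => h2 i ((IHyr i).2.1 h'),
      fun j h' => h1 j ((IHxl j _).2.1 h')⟩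
  · obtain ⟨h1, h2⟩ := le_iff_forall_lf.1 h
    exact le_iff_forall_lf.2 ⟨fun i h' => h2 i ((IHyl i).1.2 h'),
      fun j h' => h1 j ((IHxr j _).1.2 h')⟩
  · obtain ⟨h1, h2⟩ := le_iff_forall_lf.1 h
    exact le_iff_forall_lf.2 ⟨fun i h' => h2 i ((IHxr i _).1.1 h'),
      fun j h' => h1 j ((IHyl j).1.1 h')⟩

@[simp] theorem neg_le_zero_iff {x : PGame} : -x ≤ 0 ↔ 0 ≤ x := by
  have h0 : (0 : PGame) ≤ -0 :=
    le_iff_forall_lf.2 ⟨fun i => PEmpty.elim i, fun j => PEmpty.elim j⟩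
  have h0' : -(0 : PGame) ≤ 0 :=
    le_iff_forall_lf.2 ⟨fun i => PEmpty.elim i, fun j => PEmpty.elim j⟩
  exact ⟨fun h => (neg_le_neg_iff' 0 x).1.1 (le_trans h h0),
    fun h => le_trans ((neg_le_neg_iff' 0 x).1.2 h) h0'⟩

def toOfListsLeftMoves {L R : List PGame} : Fin L.length ≃ (ofLists L R).LeftMoves :=
  Equiv.ulift.symm

def toOfListsRightMoves {L R : List PGame} : Fin R.length ≃ (ofLists L R).RightMoves :=
  Equiv.ulift.symm

theorem ofLists_moveLeft' {L R : List PGame} (i : (ofLists L R).LeftMoves) :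
    (ofLists L R).moveLeft i = L[(toOfListsLeftMoves.symm i).1] := rfl

theorem ofLists_moveRight' {L R : List PGame} (i : (ofLists L R).RightMoves) :
    (ofLists L R).moveRight i = R[(toOfListsRightMoves.symm i).1] := rfl

end PGame
end SetTheory

lemma ofLists_moveLeft_singleton (x : PGame) (R : List PGame)
    (i : (PGame.ofLists [x] R).LeftMoves) : (PGame.ofLists [x] R).moveLeft i = x := by
  rw [PGame.ofLists_moveLeft']
  simp

lemma ofLists_moveRight_singleton (L : List PGame) (x : PGame)
    (j : (PGame.ofLists L [x]).RightMoves) : (PGame.ofLists L [x]).moveRight j = x := by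
  rw [PGame.ofLists_moveRight']
  simp

lemma natGame_nonneg (n : ℕ) : 0 ≤ natGame n := by
  cases n with
  | zero => exact le_refl _
  | succ n =>
    rw [PGame.zero_le_lf]
    intro j
    exact ((toOfListsRightMoves (L := [natGame n]) (R := [])).symm j).elim0

lemma halfPow_pos (k : ℕ) : 0 < halfPow k := by
  induction k with
  | zero =>
    rw [lt_iff_le_and_lf]
    refine ⟨?_, ?_⟩
    · rw [PGame.zero_le_lf]
      intro j
      exact ((toOfListsRightMoves (L := [natGame 0]) (R := [])).symm j).elim0
    · rw [PGame.zero_lf_le]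
      refine ⟨toOfListsLeftMoves ⟨0, by simp⟩, ?_⟩
      have h : (halfPow 0).moveLeft (toOfListsLeftMoves ⟨0, by simp⟩) = natGame 0 :=
        ofLists_moveLeft_singleton _ _ _
      rw [h]
      exact natGame_nonneg 0
  | succ k ih =>
    rw [lt_iff_le_and_lf]
    refine ⟨?_, ?_⟩
    · rw [PGame.zero_le_lf]
      intro j
      have h : (halfPow (k+1)).moveRight j = halfPow k :=
        ofLists_moveRight_singleton _ _ j
      rw [h]
      exact ih.lf
    · rw [PGame.zero_lf_le]
      refine ⟨toOfListsLeftMoves ⟨0, by simp⟩, ?_⟩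
      have h : (halfPow (k+1)).moveLeft (toOfListsLeftMoves ⟨0, by simp⟩) = 0 :=
        ofLists_moveLeft_singleton _ _ _
      rw [h]

/-- `{0 | -natGame n}` (the right option of `tiny n`) is `≤ halfPow k`. -/
lemma g_le_halfPow (n k : ℕ) : PGame.ofLists [0] [-natGame n] ≤ halfPow k := by
  induction k with
  | zero =>
    rw [PGame.le_iff_forall_lf]
    refine ⟨?_, ?_⟩
    · intro i
      rw [ofLists_moveLeft_singleton]
      exact (halfPow_pos 0).lf
    · intro j
      exact ((toOfListsRightMoves (L := [natGame 0]) (R := [])).symm j).elim0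
  | succ k ih =>
    rw [PGame.le_iff_forall_lf]
    refine ⟨?_, ?_⟩
    · intro i
      rw [ofLists_moveLeft_singleton]
      exact (halfPow_pos (k+1)).lf
    · intro j
      have h : (halfPow (k+1)).moveRight j = halfPow k :=
        ofLists_moveRight_singleton _ _ j
      rw [h]
      refine PGame.lf_of_moveRight_le (j := toOfListsRightMoves ⟨0, by simp⟩) ?_
      rw [ofLists_moveRight_singleton]
      calc -natGame n ≤ 0 := by simpa using natGame_nonneg n
        _ ≤ halfPow k := (halfPow_pos k).le

/-- For every positive integer `n`, `+_n` is strictly positive but less than every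
positive dyadic rational game `1/2^k`. -/
theorem tiny_pos_lt_halfPow (n : ℕ) (hn : 0 < n) :
    0 < tiny n ∧ ∀ k : ℕ, tiny n < halfPow k := by
  have hg : ∀ k, PGame.ofLists [0] [-natGame n] ≤ halfPow k := g_le_halfPow n
  constructor
  · rw [lt_iff_le_and_lf]
    refine ⟨?_, ?_⟩
    · rw [PGame.zero_le_lf]
      intro j
      have h : (tiny n).moveRight j = PGame.ofLists [0] [-natGame n] :=
        ofLists_moveRight_singleton _ _ j
      rw [h, PGame.zero_lf_le]
      refine ⟨toOfListsLeftMoves ⟨0, by simp⟩, ?_⟩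
      rw [ofLists_moveLeft_singleton]
    · rw [PGame.zero_lf_le]
      refine ⟨toOfListsLeftMoves ⟨0, by simp⟩, ?_⟩
      have h : (tiny n).moveLeft (toOfListsLeftMoves ⟨0, by simp⟩) = 0 :=
        ofLists_moveLeft_singleton _ _ _
      rw [h]
  · intro k
    rw [lt_iff_le_and_lf]
    refine ⟨?_, ?_⟩
    · rw [PGame.le_iff_forall_lf]
      refine ⟨?_, ?_⟩
      · intro i
        have h : (tiny n).moveLeft i = 0 := ofLists_moveLeft_singleton _ _ i
        rw [h]
        exact (halfPow_pos k).lf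
      · intro j
        cases k with
        | zero => exact ((toOfListsRightMoves (L := [natGame 0]) (R := [])).symm j).elim0
        | succ k =>
          have h : (halfPow (k+1)).moveRight j = halfPow k :=
            ofLists_moveRight_singleton _ _ j
          rw [h]
          refine PGame.lf_of_moveRight_le
            (j := toOfListsRightMoves (L := [0])
              (R := [PGame.ofLists [0] [-natGame n]]) ⟨0, by simp⟩) ?_
          have h2 : (tiny n).moveRight (toOfListsRightMoves (L := [0])
              (R := [PGame.ofLists [0] [-natGame n]]) ⟨0, by simp⟩)
              = PGame.ofLists [0] [-natGame n] :=
            ofLists_moveRight_singleton [0] (PGame.ofLists [0] [-natGame n]) _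
          rw [h2]
          exact hg k
    · refine PGame.lf_of_moveRight_le
        (j := toOfListsRightMoves (L := [0])
          (R := [PGame.ofLists [0] [-natGame n]]) ⟨0, by simp⟩) ?_
      have h2 : (tiny n).moveRight (toOfListsRightMoves (L := [0])
          (R := [PGame.ofLists [0] [-natGame n]]) ⟨0, by simp⟩)
          = PGame.ofLists [0] [-natGame n] :=
        ofLists_moveRight_singleton [0] (PGame.ofLists [0] [-natGame n]) _
      rw [h2]
      exact hg k
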